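/- Under the assumptions of the quantile equation (v Lipschitz and strictly decreasing with slope ≤ -b, U Lipschitz, λ > 0), the pushforward measure ρ(·,t) of Lebesgue measure under X(·,t) satisfies ‖ρ(·,t)‖_{L^∞} ≤ (Lip(v)Lip(U)/(bλ))·(1 - e^{-Lip(v)Lip(U)t})^{-1} for all t > 0. -/

import Mathlib

open MeasureTheory Set Filter
open scoped Topology ENNReal NNReal

lemma aux_int_diff (LU : ℝ) (hLU : 0 < LU) (U : ℝ → ℝ)
    (hU : ∀ a b' : ℝ, |U a - U b'| ≤ LU * |a - b'|)
    (g : ℝ → ℝ) (hg : Measurable g) (x₁ x₂ : ℝ) :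
    |(∫ ζ in (0:ℝ)..1, U (x₂ - g ζ)) - ∫ ζ in (0:ℝ)..1, U (x₁ - g ζ)| ≤ LU * |x₂ - x₁| := by
  have hUc : Continuous U := by
    have : LipschitzWith (Real.toNNReal LU) U := by
      apply LipschitzWith.of_dist_le_mul
      intro a b'
      simpa [Real.dist_eq, Real.coe_toNNReal _ hLU.le] using hU a b'
    exact this.continuous
  set f₁ : ℝ → ℝ := fun ζ => U (x₁ - g ζ) with hf₁
  set f₂ : ℝ → ℝ := fun ζ => U (x₂ - g ζ) with hf₂
  have hm₁ : Measurable f₁ := hUc.measurable.comp (measurable_const.sub hg)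
  have hm₂ : Measurable f₂ := hUc.measurable.comp (measurable_const.sub hg)
  have hbd : ∀ ζ, ‖f₂ ζ - f₁ ζ‖ ≤ LU * |x₂ - x₁| := by
    intro ζ
    have := hU (x₂ - g ζ) (x₁ - g ζ)
    simpa [Real.norm_eq_abs] using this.trans (by ring_nf; exact le_rfl)
  have hdiff : IntervalIntegrable (fun ζ => f₂ ζ - f₁ ζ) volume 0 1 := by
    rw [intervalIntegrable_iff]
    refine Integrable.mono' ((integrableOn_const_iff (C := LU * |x₂ - x₁|)).mpr (Or.inr ?_)) ((hm₂.sub hm₁).aestronglyMeasurable) (Eventually.of_forall hbd)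
    exact measure_Ioc_lt_top
  by_cases h₁ : IntervalIntegrable f₁ volume 0 1
  · have h₂ : IntervalIntegrable f₂ volume 0 1 := by
      have := h₁.add hdiff
      simpa using this
    rw [← intervalIntegral.integral_sub h₂ h₁]
    have := intervalIntegral.norm_integral_le_of_norm_le_const (f := fun ζ => f₂ ζ - f₁ ζ)
      (a := 0) (b := 1) (C := LU * |x₂ - x₁|) (fun x _ => hbd x)
    simpa [Real.norm_eq_abs] using this
  · have h₂ : ¬ IntervalIntegrable f₂ volume 0 1 := by
      intro h₂
      exact h₁ (by simpa using h₂.sub hdiff)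
    rw [intervalIntegral.integral_undef h₁, intervalIntegral.integral_undef h₂]
    simp
    positivity

lemma aux_slope (Lv LU lam b : ℝ) (hLv : 0 < Lv) (hLU : 0 < LU) (hlam : 0 < lam) (hb : 0 < b)
    (v U : ℝ → ℝ)
    (hv : ∀ a b' : ℝ, |v a - v b'| ≤ Lv * |a - b'|)
    (hU : ∀ a b' : ℝ, |U a - U b'| ≤ LU * |a - b'|)
    (hvdec : ∀ r₁ r₂ : ℝ, r₁ ≤ r₂ → v r₂ - v r₁ ≤ -b * (r₂ - r₁))
    (X : ℝ → ℝ → ℝ) (hXmeas : ∀ t : ℝ, Measurable (fun z => X z t))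
    (hode : ∀ z ∈ Set.Icc (0:ℝ) 1, ∀ t, 0 ≤ t →
      HasDerivAt (X z) (v ((∫ ζ in (0:ℝ)..1, U (X z t - X ζ t)) - lam * z)) t)
    (hinit : MonotoneOn (fun z => X z 0) (Set.Icc (0:ℝ) 1)) :
    ∀ t, 0 ≤ t → ∀ z₁ ∈ Set.Icc (0:ℝ) 1, ∀ z₂ ∈ Set.Icc (0:ℝ) 1, z₁ ≤ z₂ →
      b * lam * (z₂ - z₁) / (Lv * LU) * (1 - Real.exp (-(Lv * LU) * t)) ≤ X z₂ t - X z₁ t := by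
  intro t ht z₁ hz₁ z₂ hz₂ hz
  set K : ℝ := Lv * LU with hKdef
  have hK : 0 < K := mul_pos hLv hLU
  set C : ℝ := b * lam * (z₂ - z₁) / K with hCdef
  have hC0 : 0 ≤ C := by
    have h : (0:ℝ) ≤ z₂ - z₁ := sub_nonneg.mpr hz
    positivity
  have hCK : C * K = b * lam * (z₂ - z₁) := by
    rw [hCdef]; exact div_mul_cancel₀ _ hK.ne'
  set y : ℝ → ℝ := fun s => C * (1 - Real.exp (-K * s)) with hydef
  set D : ℝ → ℝ := fun s => X z₂ s - X z₁ s with hDdef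
  set I : ℝ → ℝ → ℝ := fun z s => ∫ ζ in (0:ℝ)..1, U (X z s - X ζ s) with hIdef
  set D' : ℝ → ℝ := fun s => v (I z₂ s - lam * z₂) - v (I z₁ s - lam * z₁) with hD'def
  set u : ℝ → ℝ := fun s => y s - D s with hudef
  set u' : ℝ → ℝ := fun s => C * K * Real.exp (-K * s) - D' s with hu'def
  have hy0 : ∀ s, 0 ≤ s → 0 ≤ y s := by
    intro s hs
    have : Real.exp (-K * s) ≤ 1 := by
      rw [← Real.exp_zero]
      apply Real.exp_le_exp.mpr
      nlinarith
    have : 0 ≤ 1 - Real.exp (-K * s) := by linarith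
    exact mul_nonneg hC0 this
  have hy : ∀ s, HasDerivAt y (C * K * Real.exp (-K * s)) s := by
    intro s
    have h1 : HasDerivAt (fun x : ℝ => Real.exp (-K * x)) (Real.exp (-K * s) * -K) s := by
      simpa using ((hasDerivAt_id s).const_mul (-K)).exp
    have h2 := (h1.const_sub 1).const_mul C
    refine h2.congr_deriv ?_
    ring
  have hD : ∀ s, 0 ≤ s → HasDerivAt D (D' s) s := by
    intro s hs
    exact (hode z₂ hz₂ s hs).sub (hode z₁ hz₁ s hs)
  have hu : ∀ s, 0 ≤ s → HasDerivAt u (u' s) s := fun s hs => (hy s).sub (hD s hs)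
  have hDbound : ∀ s, b * lam * (z₂ - z₁) - K * |D s| ≤ D' s := by
    intro s
    have hI := aux_int_diff LU hLU U hU (fun ζ => X ζ s) (hXmeas s) (X z₁ s) (X z₂ s)
    -- hI : |I z₂ s - I z₁ s| ≤ LU * |D s|
    have h1 : -(K * |D s|) ≤ v (I z₂ s - lam * z₂) - v (I z₁ s - lam * z₂) := by
      have h := hv (I z₂ s - lam * z₂) (I z₁ s - lam * z₂)
      have habs : |I z₂ s - lam * z₂ - (I z₁ s - lam * z₂)| = |I z₂ s - I z₁ s| := by
        ring_nf
      rw [habs] at h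
      have h2 : Lv * |I z₂ s - I z₁ s| ≤ Lv * (LU * |X z₂ s - X z₁ s|) :=
        mul_le_mul_of_nonneg_left hI hLv.le
      have h3 := neg_abs_le (v (I z₂ s - lam * z₂) - v (I z₁ s - lam * z₂))
      have : |D s| = |X z₂ s - X z₁ s| := rfl
      rw [this]
      nlinarith [abs_nonneg (v (I z₂ s - lam * z₂) - v (I z₁ s - lam * z₂))]
    have h2 : b * lam * (z₂ - z₁) ≤ v (I z₁ s - lam * z₂) - v (I z₁ s - lam * z₁) := by
      have hle : I z₁ s - lam * z₂ ≤ I z₁ s - lam * z₁ := by nlinarith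
      have := hvdec _ _ hle
      nlinarith
    have : D' s = (v (I z₂ s - lam * z₂) - v (I z₁ s - lam * z₂))
        + (v (I z₁ s - lam * z₂) - v (I z₁ s - lam * z₁)) := by
      simp only [hD'def]; ring
    rw [this]
    linarith
  have hu'le : ∀ s, 0 ≤ s → 0 ≤ u s → u' s ≤ K * u s := by
    intro s hs hus
    have h1 := hDbound s
    have h2 : C * K * Real.exp (-K * s) = C * K - K * y s := by
      simp only [hydef]; ring
    have h3 : u' s ≤ K * (|D s| - y s) := by
      simp only [hu'def]
      rw [h2, hCK]
      linarith
    have h4 : |D s| - y s ≤ u s := by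
      have hy' := hy0 s hs
      have : D s ≤ y s := by simp only [hudef] at hus; linarith
      rcases abs_cases (D s) with ⟨h, _⟩ | ⟨h, _⟩ <;> simp only [hudef] <;> linarith
    calc u' s ≤ K * (|D s| - y s) := h3
      _ ≤ K * u s := mul_le_mul_of_nonneg_left h4 hK.le
  set g : ℝ → ℝ := fun s => max (u s) 0 with hgdef
  set g' : ℝ → ℝ := fun s => if u s < 0 then 0 else max (u' s) 0 with hg'def
  have hcont : ContinuousOn g (Icc 0 t) := by
    intro s hs
    have h1 : ContinuousAt u s := (hu s hs.1).continuousAt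
    have h2 : ContinuousAt g s := h1.max continuousAt_const
    exact h2.continuousWithinAt
  have hslope : ∀ x ∈ Ico (0:ℝ) t, ∀ r, g' x < r →
      ∃ᶠ z in 𝓝[>] x, (z - x)⁻¹ * (g z - g x) < r := by
    intro x hx r hr
    by_cases hux : u x < 0
    · simp only [hg'def, if_pos hux] at hr
      have hev : ∀ᶠ z in 𝓝 x, u z < 0 :=
        ((hu x hx.1).continuousAt).eventually_lt continuousAt_const hux
      refine ((hev.filter_mono nhdsWithin_le_nhds).mono ?_).frequently
      intro z hz
      have : g z = 0 := max_eq_right hz.le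
      have hgx : g x = 0 := max_eq_right hux.le
      rw [this, hgx]
      simpa using hr
    · push_neg at hux
      simp only [hg'def, if_neg (not_lt.mpr hux)] at hr
      have hr0 : 0 < r := lt_of_le_of_lt (le_max_right _ _) hr
      have hru : u' x < r := lt_of_le_of_lt (le_max_left _ _) hr
      have hfreq := ((hu x hx.1).hasDerivWithinAt (s := Ici x)).liminf_right_slope_le hru
      refine (hfreq.and_eventually self_mem_nhdsWithin).mono ?_
      rintro z ⟨hz, hz'⟩
      have hzx : (0:ℝ) < z - x := sub_pos.mpr hz'
      have hgx : g x = u x := max_eq_left hux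
      rcases le_or_gt 0 (u z) with h0 | h0
      · have hgz : g z = u z := max_eq_left h0
        rw [slope_def_field] at hz
        rw [hgz, hgx, inv_mul_eq_div]
        exact hz
      · have hgz : g z = 0 := max_eq_right h0.le
        rw [hgz, hgx]
        have h1 : 0 ≤ (z - x)⁻¹ := inv_nonneg.mpr hzx.le
        have h2 : (z - x)⁻¹ * (0 - u x) ≤ 0 :=
          mul_nonpos_of_nonneg_of_nonpos h1 (by linarith)
        linarith
  have hbound : ∀ x ∈ Ico (0:ℝ) t, g' x ≤ K * g x + 0 := by
    intro x hx
    rw [add_zero]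
    by_cases hux : u x < 0
    · simp [hg'def, hgdef, if_pos hux, max_eq_right hux.le]
    · push_neg at hux
      have h1 := hu'le x hx.1 hux
      have hKu : 0 ≤ K * u x := mul_nonneg hK.le hux
      simp only [hg'def, if_neg (not_lt.mpr hux), hgdef, max_eq_left hux]
      exact max_le h1 hKu
  have ha : g 0 ≤ 0 := by
    have hD0 : 0 ≤ D 0 := by
      have := hinit hz₁ hz₂ hz
      simp only [hDdef]
      simpa using this
    have hy00 : y 0 = 0 := by simp [hydef]
    simp only [hgdef, hudef, hy00]
    simp
    linarith
  have H := le_gronwallBound_of_liminf_deriv_right_le hcont hslope ha hbound t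
    ⟨ht, le_refl t⟩
  rw [sub_zero, gronwallBound_ε0_δ0] at H
  have : u t ≤ 0 := le_trans (le_max_left _ _) H
  simp only [hudef, hydef, hCdef] at this
  linarith

/-- Measure-to-`L^∞` smoothing: under the quantile-equation assumptions, the pushforward
measure `ρ(·,t) = X(·,t)_# Leb|_{[0,1]}` satisfies
`‖ρ(·,t)‖_{L^∞} ≤ (Lip(v)Lip(U)/(bλ)) (1 - e^{-Lip(v)Lip(U)t})⁻¹` for all `t > 0`. -/
theorem stmt_10 (Lv LU lam b : ℝ) (hLv : 0 < Lv) (hLU : 0 < LU) (hlam : 0 < lam) (hb : 0 < b)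
    (v U : ℝ → ℝ)
    (hv : ∀ a b' : ℝ, |v a - v b'| ≤ Lv * |a - b'|)
    (hU : ∀ a b' : ℝ, |U a - U b'| ≤ LU * |a - b'|)
    (hvdec : ∀ r₁ r₂ : ℝ, r₁ ≤ r₂ → v r₂ - v r₁ ≤ -b * (r₂ - r₁))
    (X : ℝ → ℝ → ℝ) (hXmeas : ∀ t : ℝ, Measurable (fun z => X z t))
    (hode : ∀ z ∈ Set.Icc (0:ℝ) 1, ∀ t, 0 ≤ t →
      HasDerivAt (X z) (v ((∫ ζ in (0:ℝ)..1, U (X z t - X ζ t)) - lam * z)) t)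
    (hinit : MonotoneOn (fun z => X z 0) (Set.Icc (0:ℝ) 1)) :
    ∀ t, 0 < t → ∀ A : Set ℝ, MeasurableSet A →
      Measure.map (fun z => X z t) (volume.restrict (Set.Icc (0:ℝ) 1)) A ≤
        ENNReal.ofReal (Lv * LU / (b * lam) * (1 - Real.exp (-(Lv * LU) * t))⁻¹) *
          volume A := by
  have key := aux_slope Lv LU lam b hLv hLU hlam hb v U hv hU hvdec X hXmeas hode hinit
  intro t ht A hA
  set E : ℝ := 1 - Real.exp (-(Lv * LU) * t) with hEdef
  have hE : 0 < E := by
    have : Real.exp (-(Lv * LU) * t) < 1 := by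
      rw [Real.exp_lt_one_iff]
      nlinarith [mul_pos (mul_pos hLv hLU) ht]
    linarith
  set c : ℝ := b * lam / (Lv * LU) * E with hcdef
  have hc : 0 < c := by positivity
  set f : ℝ → ℝ := fun z => X z t with hfdef
  set S : Set ℝ := f ⁻¹' A ∩ Icc 0 1 with hSdef
  have hslope : ∀ z₁ ∈ Icc (0:ℝ) 1, ∀ z₂ ∈ Icc (0:ℝ) 1, z₁ ≤ z₂ →
      c * (z₂ - z₁) ≤ f z₂ - f z₁ := by
    intro z₁ h₁ z₂ h₂ hz
    have := key t ht.le z₁ h₁ z₂ h₂ hz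
    have heq : b * lam * (z₂ - z₁) / (Lv * LU) * E = c * (z₂ - z₁) := by
      rw [hcdef]; ring
    rw [heq] at this
    exact this
  have hdist : ∀ z₁ ∈ Icc (0:ℝ) 1, ∀ z₂ ∈ Icc (0:ℝ) 1,
      c * |z₂ - z₁| ≤ |f z₂ - f z₁| := by
    intro z₁ h₁ z₂ h₂
    rcases le_total z₁ z₂ with h | h
    · have := hslope z₁ h₁ z₂ h₂ h
      have h0 : 0 ≤ z₂ - z₁ := by linarith
      rw [abs_of_nonneg h0]
      exact this.trans (le_abs_self _)
    · have := hslope z₂ h₂ z₁ h₁ h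
      have h0 : z₂ - z₁ ≤ 0 := by linarith
      rw [abs_of_nonpos h0, abs_sub_comm]
      calc c * -(z₂ - z₁) = c * (z₁ - z₂) := by ring
        _ ≤ f z₁ - f z₂ := this
        _ ≤ |f z₁ - f z₂| := le_abs_self _
  have hinj : InjOn f S := by
    intro x₁ h₁ x₂ h₂ heq
    have := hdist x₁ h₁.2 x₂ h₂.2
    rw [heq] at this
    simp only [sub_self, abs_zero] at this
    have : |x₂ - x₁| ≤ 0 := by nlinarith [abs_nonneg (x₂ - x₁)]
    have : x₂ - x₁ = 0 := abs_eq_zero.mp (le_antisymm this (abs_nonneg _))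
    linarith
  have hinv := hinj.leftInvOn_invFunOn
  set g : ℝ → ℝ := Function.invFunOn f S with hgdef
  have hlip : LipschitzOnWith (Real.toNNReal c⁻¹) g (f '' S) := by
    apply LipschitzOnWith.of_dist_le_mul
    rintro y₁ ⟨x₁, hx₁, rfl⟩ y₂ ⟨x₂, hx₂, rfl⟩
    have e₁ : ∃ a ∈ S, f a = f x₁ := ⟨x₁, hx₁, rfl⟩
    have e₂ : ∃ a ∈ S, f a = f x₂ := ⟨x₂, hx₂, rfl⟩
    have hm₁ : g (f x₁) ∈ S := Function.invFunOn_mem (f := f) e₁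
    have hm₂ : g (f x₂) ∈ S := Function.invFunOn_mem (f := f) e₂
    have hq₁ : f (g (f x₁)) = f x₁ := Function.invFunOn_eq (f := f) e₁
    have hq₂ : f (g (f x₂)) = f x₂ := Function.invFunOn_eq (f := f) e₂
    have h := hdist (g (f x₁)) hm₁.2 (g (f x₂)) hm₂.2
    rw [hq₁, hq₂] at h
    rw [Real.coe_toNNReal _ (inv_nonneg.mpr hc.le), Real.dist_eq, Real.dist_eq]
    rw [abs_sub_comm (g (f x₁)) (g (f x₂)), abs_sub_comm (f x₁) (f x₂)]
    calc |g (f x₂) - g (f x₁)| = c⁻¹ * (c * |g (f x₂) - g (f x₁)|) := by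
          field_simp
      _ ≤ c⁻¹ * |f x₂ - f x₁| := by
          apply mul_le_mul_of_nonneg_left h (inv_nonneg.mpr hc.le)
  have hSsub : S ⊆ g '' (f '' S) := by
    intro x hx
    exact ⟨f x, mem_image_of_mem f hx, hinv hx⟩
  have himg : f '' S ⊆ A := by
    rintro y ⟨x, hx, rfl⟩
    exact hx.1
  have hmap : Measure.map f (volume.restrict (Icc 0 1)) A = volume S := by
    rw [Measure.map_apply (hXmeas t) hA, Measure.restrict_apply ((hXmeas t) hA)]
  rw [hmap]
  have hconst : (Real.toNNReal c⁻¹ : ℝ≥0∞) =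
      ENNReal.ofReal (Lv * LU / (b * lam) * E⁻¹) := by
    have h : c⁻¹ = Lv * LU / (b * lam) * E⁻¹ := by
      rw [hcdef, mul_inv, inv_div]
    rw [← h]
    rfl
  calc volume S ≤ volume (g '' (f '' S)) := measure_mono hSsub
    _ = μH[1] (g '' (f '' S)) := by rw [MeasureTheory.hausdorffMeasure_real]
    _ ≤ (Real.toNNReal c⁻¹ : ℝ≥0∞) ^ (1:ℝ) * μH[1] (f '' S) :=
        hlip.hausdorffMeasure_image_le zero_le_one
    _ = (Real.toNNReal c⁻¹ : ℝ≥0∞) * volume (f '' S) := by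
        rw [ENNReal.rpow_one, MeasureTheory.hausdorffMeasure_real]
    _ ≤ ENNReal.ofReal (Lv * LU / (b * lam) * E⁻¹) * volume A := by
        rw [hconst]
        exact mul_le_mul_right (measure_mono himg) _
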